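/- Let (A, d) be a commutative differential algebra of weight λ and define d_A on Ш(A) by d_A(u₀⊗u₁⊗⋯⊗u_k) = d(u₀)⊗u₁⊗⋯⊗u_k + u₀u₁⊗u₂⊗⋯⊗u_k + λ d(u₀)u₁⊗u₂⊗⋯⊗u_k (for k ≥ 1, and d_A(u₀) = d(u₀)). Then d_A is a λ-derivation on Ш(A), and d_A ∘ P_A = id on Ш(A), so (Ш(A), d_A, P_A) is a differential Rota-Baxter algebra of weight λ. -/

import Mathlib

open scoped TensorProduct DirectSum
open PiTensorProduct

/-- The underlying k-module of the mixable shuffle algebra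
Ш(A) = ⊕_{m≥0} A^{⊗(m+1)}. -/
abbrev MixShuffle (k A : Type*) [CommRing k] [CommRing A] [Algebra k A] :=
  ⨁ m : ℕ, ⨂[k] (_ : Fin (m + 1)), A

/-- The pure tensor a₀ ⊗ ⋯ ⊗ a_m in the depth-(m+1) component of Ш(A). -/
noncomputable def mixTensor {k A : Type*} [CommRing k] [CommRing A] [Algebra k A]
    (m : ℕ) (f : Fin (m + 1) → A) : MixShuffle k A :=
  DirectSum.of (fun m => ⨂[k] (_ : Fin (m + 1)), A) m (tprod k f)

set_option linter.unusedSectionVars false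

section Helpers
variable {k A : Type*} [CommRing k] [CommRing A] [Algebra k A]

private lemma mix_ind {P : MixShuffle k A → Prop} (h0 : P 0)
    (hgen : ∀ (m : ℕ) (f : Fin (m + 1) → A), P (mixTensor m f))
    (hsmul : ∀ (r : k) (x : MixShuffle k A), P x → P (r • x))
    (hadd : ∀ x y : MixShuffle k A, P x → P y → P (x + y)) (x : MixShuffle k A) : P x := by
  refine DirectSum.induction_on x h0 (fun m t => ?_) hadd
  induction t using PiTensorProduct.induction_on with
  | smul_tprod r f =>
      have h : DirectSum.of (fun m => ⨂[k] (_ : Fin (m + 1)), A) m (r • tprod k f)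
          = r • mixTensor m f := by
        rw [mixTensor, ← DirectSum.lof_eq_of k, ← DirectSum.lof_eq_of k, map_smul]
      exact h ▸ hsmul r _ (hgen m f)
  | add u v hu hv => rw [map_add]; exact hadd _ _ hu hv

private lemma ext_gen {M : Type*} [AddCommMonoid M] [Module k M]
    (F G : MixShuffle k A →ₗ[k] M)
    (h : ∀ (m : ℕ) (f : Fin (m + 1) → A), F (mixTensor m f) = G (mixTensor m f))
    (x : MixShuffle k A) : F x = G x := by
  refine mix_ind (P := fun x => F x = G x) (by simp) h ?_ ?_ x
  · intro r x hx; rw [map_smul, map_smul, hx]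
  · intro x y hx hy; rw [map_add, map_add, hx, hy]

private lemma upd_eq_cons {n : ℕ} (f : Fin (n + 1) → A) (x : A) :
    Function.update f 0 x = Fin.cons x (fun i => f i.succ) := by
  funext j
  refine Fin.cases ?_ (fun i => ?_) j
  · simp
  · simp [Function.update_of_ne (Fin.succ_ne_zero i)]

private lemma cons_one {n : ℕ} (c : A) (f : Fin (n + 1) → A) :
    (Fin.cons c f : Fin (n + 2) → A) 1 = f 0 := by
  rw [← Fin.succ_zero_eq_one, Fin.cons_succ]

private lemma cons_ss {n : ℕ} (c : A) (f : Fin (n + 1) → A) :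
    (fun i : Fin n => (Fin.cons c f : Fin (n + 2) → A) i.succ.succ) = fun i => f i.succ := by
  funext i; rw [Fin.cons_succ]

private lemma mixTensor_add (m : ℕ) (f : Fin (m + 1) → A) (i : Fin (m + 1)) (x y : A) :
    mixTensor (k := k) m (Function.update f i (x + y)) =
      mixTensor m (Function.update f i x) + mixTensor m (Function.update f i y) := by
  rw [mixTensor, mixTensor, mixTensor, MultilinearMap.map_update_add, map_add]

private lemma mixTensor_smul (m : ℕ) (f : Fin (m + 1) → A) (i : Fin (m + 1)) (r : k) (x : A) :
    mixTensor (k := k) m (Function.update f i (r • x)) =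
      r • mixTensor m (Function.update f i x) := by
  rw [mixTensor, mixTensor, MultilinearMap.map_update_smul, ← DirectSum.lof_eq_of k,
    ← DirectSum.lof_eq_of k, map_smul]

private lemma mixTensor_zero (m : ℕ) (f : Fin (m + 1) → A) (i : Fin (m + 1)) (h : f i = 0) :
    mixTensor (k := k) m f = 0 := by
  rw [mixTensor, MultilinearMap.map_coord_zero (PiTensorProduct.tprod k) i h, map_zero]

private lemma fin1_const (f : Fin (0 + 1) → A) : f = fun _ => f 0 := by
  funext i
  refine Fin.cases rfl (fun i => i.elim0) i

private lemma upd1 (f : Fin (0 + 1) → A) (z : A) :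
    Function.update f 0 z = fun _ => z := by
  funext j
  refine Fin.cases ?_ (fun i => i.elim0) j
  · simp

private lemma T0_add (x y : A) :
    mixTensor (k := k) 0 (fun _ => x + y) =
      mixTensor 0 (fun _ => x) + mixTensor 0 (fun _ => y) := by
  rw [← upd1 (fun _ => x) (x + y), mixTensor_add, upd1, upd1]

private lemma T0_smul (r : k) (x : A) :
    mixTensor (k := k) 0 (fun _ => r • x) = r • mixTensor 0 (fun _ => x) := by
  rw [← upd1 (fun _ => x) (r • x), mixTensor_smul, upd1]

private lemma T0_zero : mixTensor (k := k) 0 (fun _ => (0 : A)) = 0 :=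
  mixTensor_zero 0 _ 0 rfl

end Helpers

set_option maxHeartbeats 4000000 in
/-- for a commutative differential algebra (A,D) of weight λ, the
operator d_A on Ш(A) defined by
d_A(u₀⊗u₁⊗⋯⊗u_k) = D(u₀)⊗u₁⊗⋯⊗u_k + u₀u₁⊗u₂⊗⋯⊗u_k + λD(u₀)u₁⊗u₂⊗⋯⊗u_k
(and d_A(u₀) = D(u₀)) is a λ-derivation on Ш(A) (for the mixable shuffle
product `mul`, with left concatenation `L`), and d_A ∘ P_A = id where
P_A = L 1; hence (Ш(A), d_A, P_A) is a differential Rota-Baxter algebra of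
weight λ. -/
theorem mixable_shuffle_differential_rota_baxter
    {k A : Type*} [CommRing k] [CommRing A] [Algebra k A] (lam : k)
    (D : A →ₗ[k] A)
    (hLeibniz : ∀ x y : A, D (x * y) = D x * y + x * D y + lam • (D x * D y))
    (hone : D 1 = 0)
    (mul : MixShuffle k A →ₗ[k] MixShuffle k A →ₗ[k] MixShuffle k A)
    (L : A → MixShuffle k A →ₗ[k] MixShuffle k A)
    (hL : ∀ (c : A) (m : ℕ) (f : Fin (m + 1) → A),
      L c (mixTensor m f) = mixTensor (m + 1) (Fin.cons c f))
    (h0n : ∀ (a0 : A) (n : ℕ) (b : Fin (n + 1) → A),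
      mul (mixTensor 0 fun _ => a0) (mixTensor n b) =
        mixTensor n (Function.update b 0 (a0 * b 0)))
    (hm0 : ∀ (m : ℕ) (a : Fin (m + 1) → A) (b0 : A),
      mul (mixTensor m a) (mixTensor 0 fun _ => b0) =
        mixTensor m (Function.update a 0 (a 0 * b0)))
    (hmn : ∀ (m n : ℕ) (a : Fin (m + 2) → A) (b : Fin (n + 2) → A),
      mul (mixTensor (m + 1) a) (mixTensor (n + 1) b) =
        L (a 0 * b 0)
          (mul (mixTensor m (Fin.tail a))
              (mixTensor (n + 1) (Fin.cons 1 (Fin.tail b)))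
            + mul (mixTensor (m + 1) (Fin.cons 1 (Fin.tail a)))
                (mixTensor n (Fin.tail b))
            + lam • mul (mixTensor m (Fin.tail a)) (mixTensor n (Fin.tail b))))
    (dM : MixShuffle k A →ₗ[k] MixShuffle k A)
    (hd0 : ∀ u0 : A,
      dM (mixTensor 0 fun _ => u0) = mixTensor 0 fun _ => D u0)
    (hdrec : ∀ (m : ℕ) (u : Fin (m + 2) → A),
      dM (mixTensor (m + 1) u) =
        mixTensor (m + 1) (Function.update u 0 (D (u 0)))
          + mixTensor m (Fin.cons (u 0 * u 1) fun i : Fin m => u i.succ.succ)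
          + lam • mixTensor m
              (Fin.cons (D (u 0) * u 1) fun i : Fin m => u i.succ.succ)) :
    (∀ x y : MixShuffle k A,
      dM (mul x y) = mul (dM x) y + mul x (dM y) + lam • mul (dM x) (dM y)) ∧
    dM (mixTensor 0 fun _ => (1 : A)) = 0 ∧
    (∀ x : MixShuffle k A, dM (L 1 x) = x) := by
  classical
  -- generator decomposition
  have hdec : ∀ (m : ℕ) (a : Fin (m + 2) → A),
      mixTensor (m + 1) a = L (a 0) (mixTensor m (Fin.tail a)) := by
    intro m a; rw [hL, Fin.cons_self_tail]
  -- additivity of L in the scalar argument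
  have hLadd : ∀ (c e : A) (x : MixShuffle k A), L (c + e) x = L c x + L e x := by
    intro c e x
    have key : ∀ (m : ℕ) (f : Fin (m + 1) → A),
        L (c + e) (mixTensor m f) = (L c + L e) (mixTensor m f) := by
      intro m f
      simp only [LinearMap.add_apply]
      rw [hL, hL, hL,
        show (Fin.cons (c + e) f : Fin (m + 2) → A)
            = Function.update (Fin.cons c f) 0 (c + e) by rw [Fin.update_cons_zero],
        mixTensor_add, Fin.update_cons_zero, Fin.update_cons_zero]
    exact ext_gen (L (c + e)) (L c + L e) key x
  have hLsmul : ∀ (r : k) (c : A) (x : MixShuffle k A), L (r • c) x = r • L c x := by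
    intro r c x
    have key : ∀ (m : ℕ) (f : Fin (m + 1) → A),
        L (r • c) (mixTensor m f) = (r • L c) (mixTensor m f) := by
      intro m f
      simp only [LinearMap.smul_apply]
      rw [hL, hL,
        show (Fin.cons (r • c) f : Fin (m + 2) → A)
            = Function.update (Fin.cons c f) 0 (r • c) by rw [Fin.update_cons_zero],
        mixTensor_smul, Fin.update_cons_zero]
    exact ext_gen (L (r • c)) (r • L c) key x
  have hLzero : ∀ x : MixShuffle k A, L (0 : A) x = 0 := by
    intro x
    have key : ∀ (m : ℕ) (f : Fin (m + 1) → A),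
        L (0 : A) (mixTensor m f) = (0 : MixShuffle k A →ₗ[k] MixShuffle k A) (mixTensor m f) := by
      intro m f
      rw [hL]
      simp only [LinearMap.zero_apply]
      exact mixTensor_zero _ _ 0 (by simp)
    exact ext_gen (L 0) 0 key x
  -- product of two depth-0 tensors
  have hT0mul : ∀ c e : A,
      mul (mixTensor 0 fun _ => c) (mixTensor 0 fun _ => e) = mixTensor 0 fun _ => c * e := by
    intro c e
    simp only [h0n]
    rw [upd1]
  -- mul (T0 c) (L e x) = L (c*e) x
  have hL0 : ∀ (c e : A) (x : MixShuffle k A),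
      mul (mixTensor 0 fun _ => c) (L e x) = L (c * e) x := by
    intro c e x
    have key : ∀ (m : ℕ) (f : Fin (m + 1) → A),
        mul (mixTensor 0 fun _ => c) (L e (mixTensor m f)) = L (c * e) (mixTensor m f) := by
      intro m f
      rw [hL]
      simp only [h0n, Fin.cons_zero, Fin.update_cons_zero]
      rw [hL]
    exact ext_gen ((mul (mixTensor 0 fun _ => c)).comp (L e)) (L (c * e)) key x
  -- mul (L e x) (T0 c) = L (e*c) x
  have hL0R : ∀ (e c : A) (x : MixShuffle k A),
      mul (L e x) (mixTensor 0 fun _ => c) = L (e * c) x := by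
    intro e c x
    have key : ∀ (m : ℕ) (f : Fin (m + 1) → A),
        mul (L e (mixTensor m f)) (mixTensor 0 fun _ => c) = L (e * c) (mixTensor m f) := by
      intro m f
      rw [hL]
      simp only [hm0, Fin.cons_zero, Fin.update_cons_zero]
      rw [hL]
    exact ext_gen ((mul.flip (mixTensor 0 fun _ => c)).comp (L e)) (L (e * c)) key x
  -- the key multiplication recursion in L-form
  have hH : ∀ (α β : A) (x y : MixShuffle k A),
      mul (L α x) (L β y)
        = L (α * β) (mul x (L 1 y) + mul (L 1 x) y + lam • mul x y) := by
    have hy : ∀ (α β : A) (m : ℕ) (f : Fin (m + 1) → A) (y : MixShuffle k A),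
        mul (L α (mixTensor m f)) (L β y)
          = L (α * β) (mul (mixTensor m f) (L 1 y) + mul (L 1 (mixTensor m f)) y
              + lam • mul (mixTensor m f) y) := by
      intro α β m f y
      have key : ∀ (n : ℕ) (g : Fin (n + 1) → A),
          mul (L α (mixTensor m f)) (L β (mixTensor n g))
            = L (α * β) (mul (mixTensor m f) (L 1 (mixTensor n g))
                + mul (L 1 (mixTensor m f)) (mixTensor n g)
                + lam • mul (mixTensor m f) (mixTensor n g)) := by
        intro n g
        rw [hL α m f, hL β n g, hmn m n]
        simp only [Fin.cons_zero, Fin.tail_cons]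
        rw [← hL 1 n g, ← hL 1 m f]
      exact ext_gen ((mul (L α (mixTensor m f))).comp (L β))
        ((L (α * β)).comp ((mul (mixTensor m f)).comp (L 1)
          + mul (L 1 (mixTensor m f)) + lam • mul (mixTensor m f))) key y
    intro α β x y
    exact ext_gen ((mul.flip (L β y)).comp (L α))
      ((L (α * β)).comp (mul.flip (L 1 y) + (mul.flip y).comp (L 1) + lam • mul.flip y))
      (fun m f => hy α β m f y) x
  -- "associativity" lemmas with depth-0 factors
  have hA00 : ∀ (c e : A) (x : MixShuffle k A),
      mul (mixTensor 0 fun _ => c) (mul (mixTensor 0 fun _ => e) x)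
        = mul (mixTensor 0 fun _ => c * e) x := by
    intro c e x
    have key : ∀ (n : ℕ) (g : Fin (n + 1) → A),
        mul (mixTensor 0 fun _ => c) (mul (mixTensor 0 fun _ => e) (mixTensor n g))
          = mul (mixTensor 0 fun _ => c * e) (mixTensor n g) := by
      intro n g
      simp only [h0n, Function.update_self, Function.update_idem, mul_assoc]
    exact ext_gen ((mul (mixTensor 0 fun _ => c)).comp (mul (mixTensor 0 fun _ => e)))
      (mul (mixTensor 0 fun _ => c * e)) key x
  have hC0 : ∀ (e c : A) (x : MixShuffle k A),
      mul (mixTensor 0 fun _ => e) (mul x (mixTensor 0 fun _ => c))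
        = mul (mixTensor 0 fun _ => e * c) x := by
    intro e c x
    have key : ∀ (n : ℕ) (g : Fin (n + 1) → A),
        mul (mixTensor 0 fun _ => e) (mul (mixTensor n g) (mixTensor 0 fun _ => c))
          = mul (mixTensor 0 fun _ => e * c) (mixTensor n g) := by
      intro n g
      simp only [hm0, h0n, Function.update_self, Function.update_idem]
      have : e * (g 0 * c) = e * c * g 0 := by ring
      rw [this]
    exact ext_gen ((mul (mixTensor 0 fun _ => e)).comp (mul.flip (mixTensor 0 fun _ => c)))
      (mul (mixTensor 0 fun _ => e * c)) key x
  -- left associativity with depth-0 left factor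
  have hA0 : ∀ (c : A) (x y : MixShuffle k A),
      mul (mul (mixTensor 0 fun _ => c) x) y
        = mul (mixTensor 0 fun _ => c) (mul x y) := by
    have hA0L : ∀ (c e : A) (u y : MixShuffle k A),
        mul (mul (mixTensor 0 fun _ => c) (L e u)) y
          = mul (mixTensor 0 fun _ => c) (mul (L e u) y) := by
      intro c e u y
      have key : ∀ (n : ℕ) (g : Fin (n + 1) → A),
          mul (mul (mixTensor 0 fun _ => c) (L e u)) (mixTensor n g)
            = mul (mixTensor 0 fun _ => c) (mul (L e u) (mixTensor n g)) := by
        intro n g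
        rw [hL0]
        cases n with
        | zero =>
            rw [fin1_const g, hL0R, hL0R, hL0, mul_assoc]
        | succ n =>
            rw [hdec n g]
            simp only [hH]
            rw [hL0, mul_assoc]
      exact ext_gen (mul (mul (mixTensor 0 fun _ => c) (L e u)))
        ((mul (mixTensor 0 fun _ => c)).comp (mul (L e u))) key y
    intro c x y
    have key : ∀ (m : ℕ) (a : Fin (m + 1) → A),
        mul (mul (mixTensor 0 fun _ => c) (mixTensor m a)) y
          = mul (mixTensor 0 fun _ => c) (mul (mixTensor m a) y) := by
      intro m a
      cases m with
      | zero =>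
          rw [fin1_const a, hT0mul, hA00]
      | succ m =>
          rw [hdec m a]
          exact hA0L c (a 0) _ y
    exact ext_gen ((mul.flip y).comp (mul (mixTensor 0 fun _ => c)))
      ((mul (mixTensor 0 fun _ => c)).comp (mul.flip y)) key x
  -- right associativity with a depth-0 middle factor
  have hA0R : ∀ (c : A) (x y : MixShuffle k A),
      mul x (mul (mixTensor 0 fun _ => c) y)
        = mul (mixTensor 0 fun _ => c) (mul x y) := by
    have hA0RL : ∀ (c e : A) (u y : MixShuffle k A),
        mul (L e u) (mul (mixTensor 0 fun _ => c) y)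
          = mul (mixTensor 0 fun _ => c) (mul (L e u) y) := by
      intro c e u y
      have key : ∀ (n : ℕ) (g : Fin (n + 1) → A),
          mul (L e u) (mul (mixTensor 0 fun _ => c) (mixTensor n g))
            = mul (mixTensor 0 fun _ => c) (mul (L e u) (mixTensor n g)) := by
        intro n g
        cases n with
        | zero =>
            rw [fin1_const g, hT0mul, hL0R, hL0R, hL0, mul_left_comm]
        | succ n =>
            rw [hdec n g, hL0]
            simp only [hH]
            rw [hL0, mul_left_comm]
      exact ext_gen ((mul (L e u)).comp (mul (mixTensor 0 fun _ => c)))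
        ((mul (mixTensor 0 fun _ => c)).comp (mul (L e u))) key y
    intro c x y
    have key : ∀ (m : ℕ) (a : Fin (m + 1) → A),
        mul (mixTensor m a) (mul (mixTensor 0 fun _ => c) y)
          = mul (mixTensor 0 fun _ => c) (mul (mixTensor m a) y) := by
      intro m a
      cases m with
      | zero =>
          rw [fin1_const a, hA00, hA00, mul_comm (a 0) c]
      | succ m =>
          rw [hdec m a]
          exact hA0RL c (a 0) _ y
    exact ext_gen ((mul.flip (mul (mixTensor 0 fun _ => c) y)))
      ((mul (mixTensor 0 fun _ => c)).comp (mul.flip y)) key x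
  -- the three product-normalisation lemmas
  have hP1 : ∀ (c β : A) (x y : MixShuffle k A),
      mul (mul (mixTensor 0 fun _ => c) x) (L β y)
        = mul (mixTensor 0 fun _ => c * β) (mul x (L 1 y)) := by
    intro c β x y
    have h1 : mul (mixTensor 0 fun _ => β) (L 1 y) = L β y := by rw [hL0, mul_one]
    rw [hA0, ← h1, hA0R, hA00]
  have hP2 : ∀ (α c : A) (x y : MixShuffle k A),
      mul (L α x) (mul (mixTensor 0 fun _ => c) y)
        = mul (mixTensor 0 fun _ => c * α) (mul (L 1 x) y) := by
    intro α c x y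
    have h1 : mul (mixTensor 0 fun _ => α) (L 1 x) = L α x := by rw [hL0, mul_one]
    rw [hA0R, ← h1, hA0, hA00]
  have hP3 : ∀ (c e : A) (x y : MixShuffle k A),
      mul (mul (mixTensor 0 fun _ => c) x) (mul (mixTensor 0 fun _ => e) y)
        = mul (mixTensor 0 fun _ => e * c) (mul x y) := by
    intro c e x y
    rw [hA0R, hA0, hA00]
  -- derivative of L c x
  have hLd : ∀ (c : A) (x : MixShuffle k A),
      dM (L c x) = L (D c) x + mul (mixTensor 0 fun _ => c) x
        + lam • mul (mixTensor 0 fun _ => D c) x := by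
    intro c x
    have key : ∀ (m : ℕ) (f : Fin (m + 1) → A),
        dM (L c (mixTensor m f))
          = L (D c) (mixTensor m f) + mul (mixTensor 0 fun _ => c) (mixTensor m f)
            + lam • mul (mixTensor 0 fun _ => D c) (mixTensor m f) := by
      intro m f
      rw [hL, hdrec m (Fin.cons c f)]
      simp only [Fin.cons_zero, cons_one, cons_ss, Fin.update_cons_zero]
      rw [hL, h0n, h0n, upd_eq_cons, upd_eq_cons]
    exact ext_gen (dM.comp (L c))
      (L (D c) + mul (mixTensor 0 fun _ => c)
        + lam • mul (mixTensor 0 fun _ => D c)) key x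
    -- Leibniz rule against a depth-0 left factor
  have hD0 : ∀ (c : A) (y : MixShuffle k A),
      dM (mul (mixTensor 0 fun _ => c) y)
        = mul (mixTensor 0 fun _ => D c) y + mul (mixTensor 0 fun _ => c) (dM y)
          + lam • mul (mixTensor 0 fun _ => D c) (dM y) := by
    intro c y
    have key : ∀ (n : ℕ) (g : Fin (n + 1) → A),
        dM (mul (mixTensor 0 fun _ => c) (mixTensor n g))
          = mul (mixTensor 0 fun _ => D c) (mixTensor n g)
            + mul (mixTensor 0 fun _ => c) (dM (mixTensor n g))
            + lam • mul (mixTensor 0 fun _ => D c) (dM (mixTensor n g)) := by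
      intro n g
      cases n with
      | zero =>
          rw [fin1_const g, hT0mul, hd0, hd0, hT0mul, hT0mul, hT0mul]
          simp only [hLeibniz c (g 0)]
          rw [T0_add, T0_add, T0_smul]
      | succ n =>
          rw [hdec n g, hL0 c (g 0), hLd (c * g 0), hLd (g 0)]
          simp only [map_add, map_smul]
          rw [hL0 (D c) (g 0), hL0 c (D (g 0)), hL0 (D c) (D (g 0)), hA00 c (g 0),
            hA00 c (D (g 0)), hA00 (D c) (g 0), hA00 (D c) (D (g 0))]
          simp only [hLeibniz c (g 0), hLadd, hLsmul, T0_add, T0_smul]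
          simp only [map_add, map_smul, LinearMap.add_apply, LinearMap.smul_apply, smul_add]
          abel
    exact ext_gen (dM.comp (mul (mixTensor 0 fun _ => c)))
      (mul (mixTensor 0 fun _ => D c) + (mul (mixTensor 0 fun _ => c)).comp dM
        + lam • ((mul (mixTensor 0 fun _ => D c)).comp dM)) key y
  -- auxiliary: (T0 x * z) * T0 w = T0 (x*w) * z
  have hXR : ∀ (x w : A) (z : MixShuffle k A),
      mul (mul (mixTensor 0 fun _ => x) z) (mixTensor 0 fun _ => w)
        = mul (mixTensor 0 fun _ => x * w) z := by
    intro x w z; rw [hA0, hC0]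
  -- Leibniz rule against a depth-0 right factor
  have hD0R : ∀ (c : A) (y : MixShuffle k A),
      dM (mul y (mixTensor 0 fun _ => c))
        = mul (dM y) (mixTensor 0 fun _ => c) + mul y (mixTensor 0 fun _ => D c)
          + lam • mul (dM y) (mixTensor 0 fun _ => D c) := by
    intro c y
    have key : ∀ (n : ℕ) (g : Fin (n + 1) → A),
        dM (mul (mixTensor n g) (mixTensor 0 fun _ => c))
          = mul (dM (mixTensor n g)) (mixTensor 0 fun _ => c)
            + mul (mixTensor n g) (mixTensor 0 fun _ => D c)
            + lam • mul (dM (mixTensor n g)) (mixTensor 0 fun _ => D c) := by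
      intro n g
      cases n with
      | zero =>
          rw [fin1_const g, hT0mul, hd0, hd0, hT0mul, hT0mul, hT0mul]
          simp only [hLeibniz (g 0) c]
          rw [T0_add, T0_add, T0_smul]
      | succ n =>
          rw [hdec n g, hL0R, hLd (g 0 * c), hLd (g 0)]
          simp only [map_add, map_smul, LinearMap.add_apply, LinearMap.smul_apply]
          rw [hL0R (D (g 0)) c, hL0R (g 0) (D c), hL0R (D (g 0)) (D c), hXR (g 0) c,
            hXR (D (g 0)) c, hXR (g 0) (D c), hXR (D (g 0)) (D c)]
          simp only [hLeibniz (g 0) c, hLadd, hLsmul, T0_add, T0_smul]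
          simp only [map_add, map_smul, LinearMap.add_apply, LinearMap.smul_apply, smul_add]
          abel
    exact ext_gen (dM.comp (mul.flip (mixTensor 0 fun _ => c)))
      ((mul.flip (mixTensor 0 fun _ => c)).comp dM + mul.flip (mixTensor 0 fun _ => D c)
        + lam • ((mul.flip (mixTensor 0 fun _ => D c)).comp dM)) key y
  -- the main Leibniz computation for two factors of depth ≥ 1
  have hLL : ∀ (α β : A) (u v : MixShuffle k A),
      dM (mul (L α u) (L β v))
        = mul (dM (L α u)) (L β v) + mul (L α u) (dM (L β v))
          + lam • mul (dM (L α u)) (dM (L β v)) := by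
    intro α β u v
    rw [hH α β u v, hLd (α * β), hLd α u, hLd β v]
    simp only [map_add, map_smul, LinearMap.add_apply, LinearMap.smul_apply, smul_add]
    rw [hH (D α) β u v, hH α (D β) u v, hH (D α) (D β) u v]
    rw [hP1 α β u v, hP1 (D α) β u v, hP1 α (D β) u v, hP1 (D α) (D β) u v]
    rw [hP2 α β u v, hP2 α (D β) u v, hP2 (D α) β u v, hP2 (D α) (D β) u v]
    rw [hP3 α β u v, hP3 α (D β) u v, hP3 (D α) β u v, hP3 (D α) (D β) u v]
    simp only [hLeibniz α β, hLadd, hLsmul, T0_add, T0_smul]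
    simp only [map_add, map_smul, LinearMap.add_apply, LinearMap.smul_apply, smul_add]
    simp only [mul_comm β α, mul_comm (D β) α, mul_comm β (D α), mul_comm (D β) (D α)]
    abel
  -- Leibniz rule for a generator against anything
  have hLgen : ∀ (m : ℕ) (a : Fin (m + 1) → A) (y : MixShuffle k A),
      dM (mul (mixTensor m a) y)
        = mul (dM (mixTensor m a)) y + mul (mixTensor m a) (dM y)
          + lam • mul (dM (mixTensor m a)) (dM y) := by
    intro m a
    cases m with
    | zero =>
        intro y
        rw [fin1_const a, hd0]
        exact hD0 (a 0) y
    | succ m =>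
        have key : ∀ (n : ℕ) (g : Fin (n + 1) → A),
            dM (mul (mixTensor (m + 1) a) (mixTensor n g))
              = mul (dM (mixTensor (m + 1) a)) (mixTensor n g)
                + mul (mixTensor (m + 1) a) (dM (mixTensor n g))
                + lam • mul (dM (mixTensor (m + 1) a)) (dM (mixTensor n g)) := by
          intro n g
          cases n with
          | zero =>
              rw [fin1_const g, hd0]
              exact hD0R (g 0) (mixTensor (m + 1) a)
          | succ n =>
              rw [hdec m a, hdec n g]
              exact hLL (a 0) (g 0) _ _
        intro y
        exact ext_gen (dM.comp (mul (mixTensor (m + 1) a)))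
          (mul (dM (mixTensor (m + 1) a)) + (mul (mixTensor (m + 1) a)).comp dM
            + lam • ((mul (dM (mixTensor (m + 1) a))).comp dM)) key y
  -- full Leibniz rule
  have hLeib : ∀ x y : MixShuffle k A,
      dM (mul x y) = mul (dM x) y + mul x (dM y) + lam • mul (dM x) (dM y) := by
    intro x y
    exact ext_gen (dM.comp (mul.flip y))
      ((mul.flip y).comp dM + mul.flip (dM y) + lam • ((mul.flip (dM y)).comp dM))
      (fun m a => hLgen m a y) x
  -- T0 1 is a left unit
  have hunit : ∀ x : MixShuffle k A, mul (mixTensor 0 fun _ => (1 : A)) x = x := by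
    intro x
    have key : ∀ (n : ℕ) (g : Fin (n + 1) → A),
        mul (mixTensor 0 fun _ => (1 : A)) (mixTensor n g)
          = LinearMap.id (R := k) (mixTensor n g) := by
      intro n g
      simp only [h0n, one_mul, Function.update_eq_self, LinearMap.id_coe, id_eq]
    exact ext_gen (mul (mixTensor 0 fun _ => (1 : A))) LinearMap.id key x
  refine ⟨hLeib, ?_, ?_⟩
  · rw [hd0]
    simp only [hone]
    exact T0_zero
  · intro x
    rw [hLd 1 x]
    simp only [hone]
    rw [hLzero, T0_zero, hunit x]
    simp
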